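/- For m ≥ 1, any knot sequence, and any j with 0 ≤ j ≤ n−1 such that t_j < t_{j+1}, the B-spline function N_{m,j−m} satisfies, for all u ∈ [t_j, t_{j+1}): N_{m,j−m}(u) = ( (t_{j+1} − t_j)^{m−1} / ∏_{k=2}^{m} (t_{j+1} − t_{j+1−k}) ) · B^m_0((u − t_j)/(t_{j+1} − t_j)). Equivalently, its adjusted Bernstein–Bézier coefficients over [t_j, t_{j+1}) are b_{m,0}^{(j−m,j)} = (t_{j+1} − t_j)^{m−1} / ∏_{k=2}^{m} (t_{j+1} − t_{j+1−k}) and b_{m,k}^{(j−m,j)} = 0 for k = 1, 2, …, m. -/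

import Mathlib

/-- The B-spline basis functions `N_{p,i}` of degree `p` over the knot
sequence `t`, defined by the de Boor–Cox recursion, with the conventions that
a fraction with vanishing denominator is replaced by `0` (automatic for real
division in Lean) and that `N_{p,q} ≡ 0` whenever `q < -p` or `q ≥ n`. -/
noncomputable def bspline (t : ℤ → ℝ) (n : ℕ) : ℕ → ℤ → ℝ → ℝ
  | 0 => fun i u =>
      if 0 ≤ i ∧ i < (n : ℤ) ∧ t i ≤ u ∧ u < t (i + 1) then 1 else 0
  | p + 1 => fun i u =>
      if -((p : ℤ) + 1) ≤ i ∧ i < (n : ℤ) then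
        (u - t i) / (t ((p : ℤ) + 1 + i) - t i) * bspline t n p i u
          + (t ((p : ℤ) + 1 + i + 1) - u) / (t ((p : ℤ) + 1 + i + 1) - t (i + 1))
              * bspline t n p (i + 1) u
      else 0

/-- The `k`-th Bernstein basis polynomial of degree `p`. -/
noncomputable def bern (p k : ℕ) (x : ℝ) : ℝ :=
  (p.choose k : ℝ) * x ^ k * (1 - x) ^ (p - k)

lemma bspline_eq_zero_of_right (t : ℤ → ℝ) (n : ℕ) :
    ∀ (p : ℕ) (i : ℤ) (u : ℝ),
      (∀ l : ℤ, i + 1 ≤ l → l ≤ i + p + 1 → t l ≤ u) → bspline t n p i u = 0 := by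
  intro p
  induction p with
  | zero =>
    intro i u h
    simp only [bspline]
    rw [if_neg]
    rintro ⟨-, -, -, h4⟩
    exact absurd (h (i + 1) le_rfl (by omega)) (not_le.2 h4)
  | succ p ih =>
    intro i u h
    simp only [bspline]
    rw [ih i u (fun l h1 h2 => h l h1 (by omega)),
        ih (i + 1) u (fun l h1 h2 => h l (by omega) (by omega))]
    split <;> ring

lemma bspline_key (m n : ℕ) (t : ℤ → ℝ)
    (hmono : ∀ k l : ℤ, -(m : ℤ) ≤ k → k ≤ l → l ≤ (n : ℤ) + m → t k ≤ t l)
    (j : ℤ) (hj1 : 0 ≤ j) (hj2 : j ≤ (n : ℤ) - 1) :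
    ∀ p, 1 ≤ p → p ≤ m → ∀ u ∈ Set.Ico (t j) (t (j + 1)),
      bspline t n p (j - p) u
        = (t (j + 1) - u) ^ p
            / ((t (j + 1) - t j)
                * ∏ k ∈ Finset.Icc 2 p, (t (j + 1) - t (j + 1 - (k : ℤ)))) := by
  intro p hp
  induction p, hp using Nat.le_induction with
  | base =>
    intro hpm u hu
    obtain ⟨hu1, hu2⟩ := hu
    simp only [bspline]
    rw [if_pos (by constructor <;> push_cast <;> omega)]
    have e1 : ((0 : ℕ) : ℤ) + 1 + (j - ((1 : ℕ) : ℤ)) = j := by push_cast; ring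
    have e2 : j - ((1 : ℕ) : ℤ) + 1 = j := by push_cast; ring
    rw [e1, e2]
    rw [if_neg (by rintro ⟨-, -, -, h4⟩; exact absurd hu1 (not_le.2 h4)),
        if_pos ⟨hj1, by omega, hu1, hu2⟩,
        show Finset.Icc 2 1 = (∅ : Finset ℕ) from rfl]
    simp
  | succ p hp ih =>
    intro hpm u hu
    obtain ⟨hu1, hu2⟩ := hu
    have hz : bspline t n p (j - ((p + 1 : ℕ) : ℤ)) u = 0 := by
      apply bspline_eq_zero_of_right
      intro l h1 h2
      exact le_trans (hmono l j (by omega) (by omega) (by omega)) hu1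
    have hIH := ih (by omega) u ⟨hu1, hu2⟩
    simp only [bspline]
    rw [if_pos (by constructor <;> push_cast <;> omega)]
    have e1 : ((p : ℤ)) + 1 + (j - ((p + 1 : ℕ) : ℤ)) = j := by push_cast; ring
    have e2 : j - ((p + 1 : ℕ) : ℤ) + 1 = j - (p : ℤ) := by push_cast; ring
    rw [e1, e2, hz, hIH]
    rw [Finset.prod_Icc_succ_top (show 2 ≤ p + 1 by omega),
        show j + 1 - ((p + 1 : ℕ) : ℤ) = j - (p : ℤ) by push_cast; ring]
    rw [mul_zero, zero_add, div_mul_div_comm, pow_succ]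
    congr 1 <;> ring


/-- over a non-empty knot span `[t_j, t_{j+1})` one has
`N_{m,j−m}(u) = ((t_{j+1} − t_j)^{m−1} / ∏_{k=2}^{m} (t_{j+1} − t_{j+1−k}))
      · B^m_0((u − t_j)/(t_{j+1} − t_j))`;
equivalently, the adjusted Bernstein–Bézier coefficients of `N_{m,j−m}` are
`b_{m,0}^{(j−m,j)} = (t_{j+1} − t_j)^{m−1} / ∏_{k=2}^{m} (t_{j+1} − t_{j+1−k})`
and `b_{m,k}^{(j−m,j)} = 0` for `k = 1, …, m`. -/
theorem bspline_first_over_span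
    (m n : ℕ) (hm : 1 ≤ m) (hn : 1 ≤ n) (t : ℤ → ℝ)
    (hmono : ∀ k l : ℤ, -(m : ℤ) ≤ k → k ≤ l → l ≤ (n : ℤ) + m → t k ≤ t l)
    (h0n : t 0 < t n)
    (j : ℤ) (hj1 : 0 ≤ j) (hj2 : j ≤ (n : ℤ) - 1) (hspan : t j < t (j + 1))
    (b : ℕ → ℝ)
    (hb : ∀ u ∈ Set.Ico (t j) (t (j + 1)),
      bspline t n m (j - m) u
        = ∑ k ∈ Finset.range (m + 1),
            b k * bern m k ((u - t j) / (t (j + 1) - t j))) :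
    (∀ u ∈ Set.Ico (t j) (t (j + 1)),
        bspline t n m (j - m) u
          = ((t (j + 1) - t j) ^ (m - 1)
                / ∏ k ∈ Finset.Icc 2 m, (t (j + 1) - t (j + 1 - (k : ℤ))))
              * bern m 0 ((u - t j) / (t (j + 1) - t j)))
      ∧ b 0 = (t (j + 1) - t j) ^ (m - 1)
                / ∏ k ∈ Finset.Icc 2 m, (t (j + 1) - t (j + 1 - (k : ℤ)))
      ∧ ∀ k : ℕ, 1 ≤ k → k ≤ m → b k = 0 := by
  have hd : (0 : ℝ) < t (j + 1) - t j := sub_pos.2 hspan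
  have hP : (0 : ℝ) < ∏ k ∈ Finset.Icc 2 m, (t (j + 1) - t (j + 1 - (k : ℤ))) := by
    apply Finset.prod_pos
    intro k hk
    rw [Finset.mem_Icc] at hk
    have h1 : t (j + 1 - (k : ℤ)) ≤ t j := hmono _ _ (by omega) (by omega) (by omega)
    linarith
  set P := ∏ k ∈ Finset.Icc 2 m, (t (j + 1) - t (j + 1 - (k : ℤ))) with hPdef
  set c := (t (j + 1) - t j) ^ (m - 1) / P with hcdef
  have key := bspline_key m n t hmono j hj1 hj2 m hm le_rfl
  have part1 : ∀ u ∈ Set.Ico (t j) (t (j + 1)),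
      bspline t n m (j - m) u = c * bern m 0 ((u - t j) / (t (j + 1) - t j)) := by
    intro u hu
    rw [key u hu, hcdef, bern]
    have hx : 1 - (u - t j) / (t (j + 1) - t j) = (t (j + 1) - u) / (t (j + 1) - t j) := by
      field_simp
      ring
    rw [hx]
    obtain ⟨m', rfl⟩ := Nat.exists_eq_add_of_le hm
    simp only [Nat.choose_zero_right, Nat.cast_one, pow_zero, Nat.sub_zero, one_mul, mul_one]
    rw [div_pow]
    rw [show 1 + m' - 1 = m' from by omega]
    rw [← hPdef]
    field_simp [hP.ne', hd.ne']
    ring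
  refine ⟨part1, ?_⟩
  -- transfer to an identity on [0,1)
  have heq : ∀ x ∈ Set.Ico (0 : ℝ) 1,
      ∑ k ∈ Finset.range (m + 1), b k * bern m k x = c * bern m 0 x := by
    intro x hx
    obtain ⟨hx0, hx1⟩ := hx
    have hu : t j + x * (t (j + 1) - t j) ∈ Set.Ico (t j) (t (j + 1)) := by
      constructor
      · nlinarith
      · nlinarith
    have h1 := hb _ hu
    have h2 := part1 _ hu
    have hxx : (t j + x * (t (j + 1) - t j) - t j) / (t (j + 1) - t j) = x := by
      field_simp
      ring
    rw [hxx] at h1 h2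
    rw [← h1, h2]
  have hev : ∀ (k : ℕ) (x : ℝ), (bernsteinPolynomial ℝ m k).eval x = bern m k x := by
    intro k x
    simp [bernsteinPolynomial, bern]
  set g : ℕ → ℝ := fun k => b k - if k = 0 then c else 0 with hgdef
  have hpoly :
      (∑ k ∈ Finset.range (m + 1),
        Polynomial.C (g k) * bernsteinPolynomial ℝ m k) = 0 := by
    have h1 : (∑ k ∈ Finset.range (m + 1), Polynomial.C (b k) * bernsteinPolynomial ℝ m k)
        = Polynomial.C c * bernsteinPolynomial ℝ m 0 := by
      apply Polynomial.eq_of_infinite_eval_eq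
      apply Set.Infinite.mono _ (Set.Ico_infinite (show (0 : ℝ) < 1 by norm_num))
      intro x hx
      simp only [Set.mem_setOf_eq, Polynomial.eval_finset_sum, Polynomial.eval_mul,
        Polynomial.eval_C, hev]
      exact heq x hx
    have h2 : (∑ k ∈ Finset.range (m + 1),
          Polynomial.C (if k = 0 then c else 0) * bernsteinPolynomial ℝ m k)
        = Polynomial.C c * bernsteinPolynomial ℝ m 0 := by
      rw [Finset.sum_eq_single_of_mem 0 (Finset.mem_range.2 (by omega))]
      · simp
      · intro l _ hl
        simp [hl]
    calc (∑ k ∈ Finset.range (m + 1), Polynomial.C (g k) * bernsteinPolynomial ℝ m k)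
        = (∑ k ∈ Finset.range (m + 1), Polynomial.C (b k) * bernsteinPolynomial ℝ m k)
          - (∑ k ∈ Finset.range (m + 1),
              Polynomial.C (if k = 0 then c else 0) * bernsteinPolynomial ℝ m k) := by
          rw [← Finset.sum_sub_distrib]
          refine Finset.sum_congr rfl fun k _ => ?_
          rw [hgdef]
          simp [sub_mul]
      _ = 0 := by rw [h1, h2, sub_self]
  have hB0 : ∀ k l : ℕ, k < l → (bernsteinPolynomial ℝ m l).coeff k = 0 := by
    intro k l hkl
    rw [show bernsteinPolynomial ℝ m l
        = Polynomial.C ((m.choose l : ℝ))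
            * ((1 - Polynomial.X) ^ (m - l) * Polynomial.X ^ l) from by
      simp [bernsteinPolynomial]; ring]
    rw [Polynomial.coeff_C_mul, Polynomial.coeff_mul_X_pow']
    simp [Nat.not_le.2 hkl, if_neg]
  have hBk : ∀ k : ℕ, (bernsteinPolynomial ℝ m k).coeff k = (m.choose k : ℝ) := by
    intro k
    rw [show bernsteinPolynomial ℝ m k
        = Polynomial.C ((m.choose k : ℝ))
            * ((1 - Polynomial.X) ^ (m - k) * Polynomial.X ^ k) from by
      simp [bernsteinPolynomial]; ring]
    rw [Polynomial.coeff_C_mul, Polynomial.coeff_mul_X_pow']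
    simp [Polynomial.coeff_zero_eq_eval_zero]
  have hg : ∀ k, k ≤ m → g k = 0 := by
    intro k
    induction k using Nat.strong_induction_on with
    | _ k IH =>
      intro hkm
      have h := congrArg (fun q => Polynomial.coeff q k) hpoly
      simp only [Polynomial.finset_sum_coeff, Polynomial.coeff_C_mul,
        Polynomial.coeff_zero] at h
      rw [Finset.sum_eq_single_of_mem k (Finset.mem_range.2 (by omega))] at h
      · rw [hBk k] at h
        have hc : (0 : ℝ) < (m.choose k : ℝ) := by
          exact_mod_cast Nat.choose_pos hkm
        have := mul_eq_zero.1 h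
        rcases this with h' | h'
        · exact h'
        · exact absurd h' (ne_of_gt hc)
      · intro l hl hlk
        rcases lt_or_gt_of_ne hlk with h' | h'
        · rw [IH l h' (by omega), zero_mul]
        · rw [hB0 k l h', mul_zero]
  have hg0 := hg 0 (by omega)
  simp only [hgdef, if_pos rfl, if_true] at hg0
  refine ⟨by linarith, fun k hk1 hk2 => ?_⟩
  have := hg k hk2
  simp only [hgdef, if_neg (by omega : ¬ k = 0)] at this
  linarith
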